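/- Main theorem (abstract form): Suppose τ : (sequence of odd-indexed times) → R satisfies the KdV Hirota bilinear identity: for every even formal power series f(z) ∈ R[[z²]], the formal residue Res_{z} [ f(z) · exp(ξ°(t−t',z)) · τ(t − [z^{-1}]) · τ(t' + [z^{-1}]) ] = 0, where ξ°(s,z) = Σ_{k odd} s_k z^k and t ± [z^{-1}] denotes the shift t_k ± z^{-k}/k. Then σ(t) := τ(t/2) satisfies the BKP Hirota bilinear identity: Res_z [ z^{-1} exp(ξ°(t−t',z)) σ(t − 2[z^{-1}]) σ(t' + 2[z^{-1}]) ] = σ(t)σ(t'), where Res_z denotes the coefficient of z^{-1}. -/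

import Mathlib

/-- The formal exponential of a power series with zero constant coefficient. -/
noncomputable def expS (R : Type*) [CommRing R] [Algebra ℚ R] (x : PowerSeries R) :
    PowerSeries R :=
  PowerSeries.mk fun n => ∑ k ∈ Finset.range (n + 1),
    ((k.factorial : ℚ)⁻¹ : ℚ) • PowerSeries.coeff n (x ^ k)

/-- `ξ°(s, z) = ∑_{k odd} s_k z^k`, truncated to odd indices `1, 3, …, 2m−1`. -/
noncomputable def xiOdd (R : Type*) [CommRing R] (m : ℕ) (s : Fin m → R) :
    PowerSeries R :=
  ∑ i : Fin m, PowerSeries.monomial (2 * (i : ℕ) + 1) (s i)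

/-- The shifted times `t + c·[z⁻¹]`: the odd time `t_k` (for `k = 2i+1`) becomes
`t_k + c·z^{−k}/k`, as a formal Laurent series in `z`. -/
noncomputable def shiftArg (R : Type*) [CommRing R] [Algebra ℚ R] (m : ℕ)
    (c : ℚ) (t : Fin m → R) : Fin m → LaurentSeries R := fun i =>
  HahnSeries.C (t i) +
    HahnSeries.single (-(2 * (i : ℕ) + 1) : ℤ)
      (algebraMap ℚ R (c / (2 * (i : ℕ) + 1)))

/-- `τ(t + c[z⁻¹])`, for a (polynomial, finitely truncated) tau-function `τ`. -/
noncomputable def tauShift (R : Type*) [CommRing R] [Algebra ℚ R] (m : ℕ)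
    (τ : MvPolynomial (Fin m) R) (c : ℚ) (t : Fin m → R) : LaurentSeries R :=
  MvPolynomial.aeval (shiftArg R m c t) τ

/-- `σ(t + c[z⁻¹])` where `σ(t) := τ(t/2)`. -/
noncomputable def sigmaShift (R : Type*) [CommRing R] [Algebra ℚ R] (m : ℕ)
    (τ : MvPolynomial (Fin m) R) (c : ℚ) (t : Fin m → R) : LaurentSeries R :=
  MvPolynomial.aeval (fun i => (1/2 : ℚ) • shiftArg R m c t i) τ

/-- `σ(t) := τ(t/2)`. -/
noncomputable def sigma' (R : Type*) [CommRing R] [Algebra ℚ R] (m : ℕ)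
    (τ : MvPolynomial (Fin m) R) (t : Fin m → R) : R :=
  MvPolynomial.eval (fun i => (1/2 : ℚ) • t i) τ

section Lemmas
open PowerSeries Finset

variable {R : Type*} [CommRing R] [Algebra ℚ R]

lemma coeff_pow_eq_zero_of_lt {x : PowerSeries R} (hx : constantCoeff x = 0)
    {k a : ℕ} (h : a < k) : coeff a (x ^ k) = 0 := by
  have hd : (X : PowerSeries R) ^ k ∣ x ^ k :=
    pow_dvd_pow_of_dvd (X_dvd_iff.mpr hx) k
  exact (X_pow_dvd_iff.mp hd) a h

lemma coeff_pow_mul_pow_eq_zero {x y : PowerSeries R} (hx : constantCoeff x = 0)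
    (hy : constantCoeff y = 0) {j k n : ℕ} (h : n < j + k) :
    coeff n (x ^ j * y ^ k) = 0 := by
  have hd : (X : PowerSeries R) ^ (j + k) ∣ x ^ j * y ^ k := by
    rw [pow_add]
    exact mul_dvd_mul (pow_dvd_pow_of_dvd (X_dvd_iff.mpr hx) j)
      (pow_dvd_pow_of_dvd (X_dvd_iff.mpr hy) k)
  exact (X_pow_dvd_iff.mp hd) n h

lemma expS_coeff (x : PowerSeries R) (n : ℕ) :
    coeff n (expS R x) = ∑ k ∈ range (n + 1), ((k.factorial : ℚ)⁻¹ : ℚ) • coeff n (x ^ k) := by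
  simp [expS]

lemma expS_coeff_trunc {x : PowerSeries R} (hx : constantCoeff x = 0) {n N : ℕ} (hN : n < N) :
    coeff n (expS R x) = ∑ k ∈ range N, ((k.factorial : ℚ)⁻¹ : ℚ) • coeff n (x ^ k) := by
  rw [expS_coeff]
  apply Finset.sum_subset (Finset.range_subset_range.mpr hN)
  intro k hk hk'
  rw [coeff_pow_eq_zero_of_lt hx (by simp at hk hk' ⊢; omega), smul_zero]

lemma expS_add {x y : PowerSeries R} (hx : constantCoeff x = 0)
    (hy : constantCoeff y = 0) : expS R (x + y) = expS R x * expS R y := by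
  ext n
  have key : coeff n (expS R x * expS R y)
      = ∑ j ∈ range (n+1), ∑ k ∈ range (n+1),
          (((j.factorial : ℚ)⁻¹ * (k.factorial : ℚ)⁻¹ : ℚ)) • coeff n (x ^ j * y ^ k) := by
    rw [PowerSeries.coeff_mul]
    have h1 : ∀ p ∈ Finset.HasAntidiagonal.antidiagonal n,
        coeff p.1 (expS R x) * coeff p.2 (expS R y)
        = ∑ j ∈ range (n+1), ∑ k ∈ range (n+1),
            (((j.factorial : ℚ)⁻¹ * (k.factorial : ℚ)⁻¹ : ℚ)) •
              (coeff p.1 (x ^ j) * coeff p.2 (y ^ k)) := by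
      intro p hp
      rw [Finset.HasAntidiagonal.mem_antidiagonal] at hp
      rw [expS_coeff_trunc hx (Nat.lt_succ_of_le (le_of_add_le_left hp.le)),
        expS_coeff_trunc hy (N := n+1) (by omega),
        Finset.sum_mul_sum]
      refine Finset.sum_congr rfl fun j _ => Finset.sum_congr rfl fun k _ => ?_
      rw [smul_mul_smul_comm, mul_smul]
    rw [Finset.sum_congr rfl h1, Finset.sum_comm]
    refine Finset.sum_congr rfl fun j _ => ?_
    rw [Finset.sum_comm]
    refine Finset.sum_congr rfl fun k _ => ?_
    rw [← Finset.smul_sum, PowerSeries.coeff_mul]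
  rw [key, expS_coeff]
  have lhs : ∀ k, coeff n ((x + y) ^ k)
      = ∑ p ∈ Finset.HasAntidiagonal.antidiagonal k, coeff n (x ^ p.1 * y ^ p.2) * (k.choose p.1 : R) := by
    intro k
    rw [Finset.Nat.sum_antidiagonal_eq_sum_range_succ_mk, add_pow, map_sum]
    refine Finset.sum_congr rfl fun j _ => ?_
    rw [← map_natCast PowerSeries.C (k.choose j), PowerSeries.coeff_mul_C]
  -- rewrite LHS as a sum over the union of antidiagonals
  have hco : ∀ k, ∀ p ∈ Finset.HasAntidiagonal.antidiagonal k,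
      ((k.factorial : ℚ)⁻¹ : ℚ) • (coeff n (x ^ p.1 * y ^ p.2) * (k.choose p.1 : R))
      = (((p.1.factorial : ℚ)⁻¹ * (p.2.factorial : ℚ)⁻¹ : ℚ)) • coeff n (x ^ p.1 * y ^ p.2) := by
    intro k p hp
    rw [Finset.HasAntidiagonal.mem_antidiagonal] at hp
    have h1 : (k.choose p.1 : R) = algebraMap ℚ R (k.choose p.1 : ℚ) := by
      simp
    rw [h1, mul_comm, ← Algebra.smul_def, smul_smul]
    congr 1
    have h2 : p.1 ≤ k := by omega
    have h3 : (k.choose p.1 : ℚ) * p.1.factorial * (k - p.1).factorial = k.factorial := by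
      exact_mod_cast congrArg (Nat.cast (R := ℚ)) (Nat.choose_mul_factorial_mul_factorial h2)
    have h4 : p.2 = k - p.1 := by omega
    have hf1 : (p.1.factorial : ℚ) ≠ 0 := Nat.cast_ne_zero.mpr p.1.factorial_ne_zero
    have hf2 : ((k - p.1).factorial : ℚ) ≠ 0 := Nat.cast_ne_zero.mpr (k - p.1).factorial_ne_zero
    have hf3 : (k.factorial : ℚ) ≠ 0 := Nat.cast_ne_zero.mpr k.factorial_ne_zero
    rw [h4]
    field_simp
    linarith [h3]
  calc ∑ k ∈ range (n + 1), ((k.factorial : ℚ)⁻¹ : ℚ) • coeff n ((x+y) ^ k)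
      = ∑ k ∈ range (n + 1), ∑ p ∈ Finset.HasAntidiagonal.antidiagonal k,
          (((p.1.factorial : ℚ)⁻¹ * (p.2.factorial : ℚ)⁻¹ : ℚ)) • coeff n (x ^ p.1 * y ^ p.2) := by
        refine Finset.sum_congr rfl fun k _ => ?_
        rw [lhs k, Finset.smul_sum]
        exact Finset.sum_congr rfl (hco k)
    _ = ∑ p ∈ (range (n+1)).biUnion Finset.HasAntidiagonal.antidiagonal,
          (((p.1.factorial : ℚ)⁻¹ * (p.2.factorial : ℚ)⁻¹ : ℚ)) • coeff n (x ^ p.1 * y ^ p.2) := by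
        rw [Finset.sum_biUnion]
        intro a _ b _ hab
        simp only [Finset.disjoint_left]
        intro p hpa hpb
        rw [Finset.HasAntidiagonal.mem_antidiagonal] at hpa hpb
        exact hab (by omega)
    _ = ∑ p ∈ range (n+1) ×ˢ range (n+1),
          (((p.1.factorial : ℚ)⁻¹ * (p.2.factorial : ℚ)⁻¹ : ℚ)) • coeff n (x ^ p.1 * y ^ p.2) := by
        apply Finset.sum_subset
        · intro p hp
          simp only [Finset.mem_biUnion, Finset.mem_range, Finset.HasAntidiagonal.mem_antidiagonal] at hp
          obtain ⟨k, hk, hpk⟩ := hp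
          simp only [Finset.mem_product, Finset.mem_range]
          omega
        · intro p hp hp'
          simp only [Finset.mem_product, Finset.mem_range] at hp
          simp only [Finset.mem_biUnion, Finset.mem_range, Finset.HasAntidiagonal.mem_antidiagonal] at hp'
          have : n < p.1 + p.2 := by
            by_contra h
            exact hp' ⟨p.1 + p.2, by omega, rfl⟩
          rw [coeff_pow_mul_pow_eq_zero hx hy this, smul_zero]
    _ = ∑ j ∈ range (n+1), ∑ k ∈ range (n+1),
          (((j.factorial : ℚ)⁻¹ * (k.factorial : ℚ)⁻¹ : ℚ)) • coeff n (x ^ j * y ^ k) := by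
        rw [Finset.sum_product]

end Lemmas

section Lemmas2
open PowerSeries Finset

variable {R : Type*} [CommRing R] [Algebra ℚ R]

lemma expS_zero : expS R (0 : PowerSeries R) = 1 := by
  ext n
  rw [expS_coeff]
  rcases n with _ | n
  · simp
  · rw [Finset.sum_eq_zero]
    · simp
    intro k hk
    rcases k with _ | k
    · simp
    · simp [zero_pow]

lemma expS_coeff_zero (x : PowerSeries R) : coeff 0 (expS R x) = 1 := by
  rw [expS_coeff]; simp

lemma expS_mul_expS_neg {x : PowerSeries R} (hx : constantCoeff x = 0) :
    expS R x * expS R (-x) = 1 := by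
  rw [← expS_add hx (by simp [hx]), add_neg_cancel, expS_zero]

/-- If all even coefficients of `x` vanish, then `coeff n (x^k) = 0` whenever `n + k` is odd. -/
lemma coeff_pow_odd_eq_zero {x : PowerSeries R} (hodd : ∀ j : ℕ, Even j → coeff j x = 0) :
    ∀ (k n : ℕ), Odd (n + k) → coeff n (x ^ k) = 0 := by
  intro k
  induction k with
  | zero =>
    intro n hn
    rw [pow_zero, PowerSeries.coeff_one, if_neg]
    rintro rfl
    simp at hn
  | succ k ih =>
    intro n hn
    rw [pow_succ, PowerSeries.coeff_mul]
    apply Finset.sum_eq_zero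
    intro p hp
    rw [Finset.HasAntidiagonal.mem_antidiagonal] at hp
    rcases Nat.even_or_odd p.2 with h2 | h2
    · rw [hodd p.2 h2, mul_zero]
    · rw [ih p.1 (by rw [Nat.odd_iff] at hn h2 ⊢; omega), zero_mul]

lemma expS_sub_even {x : PowerSeries R} (hodd : ∀ j : ℕ, Even j → coeff j x = 0)
    {n : ℕ} (hn : Even n) : coeff n (expS R x) = coeff n (expS R (-x)) := by
  rw [expS_coeff, expS_coeff]
  refine Finset.sum_congr rfl fun k _ => ?_
  rcases Nat.even_or_odd k with hk | hk
  · rw [hk.neg_pow]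
  · rw [hk.neg_pow, map_neg,
      coeff_pow_odd_eq_zero hodd k n (by rw [Nat.odd_iff] at hk ⊢; rw [Nat.even_iff] at hn; omega)]
    simp

lemma xiOdd_constantCoeff (m : ℕ) (s : Fin m → R) : constantCoeff (xiOdd R m s) = 0 := by
  rw [xiOdd, map_sum]
  apply Finset.sum_eq_zero
  intro i _
  rw [← PowerSeries.coeff_zero_eq_constantCoeff, PowerSeries.coeff_monomial, if_neg (by omega)]

lemma xiOdd_even_coeff (m : ℕ) (s : Fin m → R) {j : ℕ} (hj : Even j) :
    coeff j (xiOdd R m s) = 0 := by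
  rw [xiOdd, map_sum]
  apply Finset.sum_eq_zero
  intro i _
  rw [PowerSeries.coeff_monomial, if_neg]
  rintro rfl
  rw [Nat.even_iff] at hj; omega

lemma xiOdd_add (m : ℕ) (a b : Fin m → R) :
    xiOdd R m (a + b) = xiOdd R m a + xiOdd R m b := by
  rw [xiOdd, xiOdd, xiOdd, ← Finset.sum_add_distrib]
  refine Finset.sum_congr rfl fun i _ => ?_
  simp [map_add]

end Lemmas2

section Lemmas3
open PowerSeries Finset

variable {R : Type*} [CommRing R] [Algebra ℚ R]

lemma algebraMap_laurent (a : R) : algebraMap R (LaurentSeries R) a = HahnSeries.C a := by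
  rw [HahnSeries.algebraMap_apply', PowerSeries.algebraMap_apply]
  simp

/-- Product of Laurent series supported in nonpositive degrees. -/
lemma hahn_mul_nonpos {x y : LaurentSeries R}
    (hx : ∀ j : ℤ, 0 < j → x.coeff j = 0) (hy : ∀ j : ℤ, 0 < j → y.coeff j = 0) :
    (∀ j : ℤ, 0 < j → (x * y).coeff j = 0) ∧ (x * y).coeff 0 = x.coeff 0 * y.coeff 0 := by
  have hxs : ∀ j ∈ x.support, j ≤ 0 := by
    intro j hj
    by_contra h
    exact hj (hx j (by omega))
  have hys : ∀ j ∈ y.support, j ≤ 0 := by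
    intro j hj
    by_contra h
    exact hj (hy j (by omega))
  constructor
  · intro j hj
    rw [HahnSeries.coeff_mul]
    apply Finset.sum_eq_zero
    intro ij hij
    rw [Finset.mem_addAntidiagonal] at hij
    have := hxs ij.1 hij.1
    have := hys ij.2 hij.2.1
    omega
  · rw [HahnSeries.coeff_mul]
    rw [Finset.sum_eq_single (0, 0)]
    · intro ij hij hne
      rw [Finset.mem_addAntidiagonal] at hij
      have h1 := hxs ij.1 hij.1
      have h2 := hys ij.2 hij.2.1
      have : ij.1 = 0 ∧ ij.2 = 0 := by
        constructor <;> omega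
      exact absurd (Prod.ext this.1 this.2) hne
    · intro h
      by_cases h1 : x.coeff 0 = 0
      · show x.coeff 0 * y.coeff 0 = 0
        rw [h1, zero_mul]
      · have h2 : y.coeff 0 = 0 := by
          by_contra h2
          exact h (Finset.mem_addAntidiagonal.mpr
            ⟨(HahnSeries.mem_support _ _).mpr h1, (HahnSeries.mem_support _ _).mpr h2, add_zero 0⟩)
        show x.coeff 0 * y.coeff 0 = 0
        rw [h2, mul_zero]

lemma aeval_nonpos (m : ℕ) (v : Fin m → LaurentSeries R)
    (hv : ∀ i, ∀ j : ℤ, 0 < j → (v i).coeff j = 0) (p : MvPolynomial (Fin m) R) :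
    (∀ j : ℤ, 0 < j → (MvPolynomial.aeval v p).coeff j = 0) ∧
      (MvPolynomial.aeval v p).coeff 0 = MvPolynomial.eval (fun i => (v i).coeff 0) p := by
  induction p using MvPolynomial.induction_on with
  | C a =>
    constructor
    · intro j hj
      rw [MvPolynomial.aeval_C, algebraMap_laurent, HahnSeries.C_apply, HahnSeries.coeff_single,
        if_neg (by omega)]
    · rw [MvPolynomial.aeval_C, MvPolynomial.eval_C, algebraMap_laurent, HahnSeries.C_apply,
        HahnSeries.coeff_single_same]
  | add p q hp hq =>
    constructor
    · intro j hj
      rw [map_add, HahnSeries.coeff_add, hp.1 j hj, hq.1 j hj, add_zero]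
    · rw [map_add, HahnSeries.coeff_add, hp.2, hq.2, map_add]
  | mul_X p i hp =>
    have hmul := hahn_mul_nonpos (x := MvPolynomial.aeval v p) (y := v i) hp.1 (hv i)
    constructor
    · intro j hj
      rw [map_mul, MvPolynomial.aeval_X]
      exact hmul.1 j hj
    · rw [map_mul, MvPolynomial.aeval_X, map_mul, MvPolynomial.eval_X, hmul.2, hp.2]

lemma shiftArg_nonpos (m : ℕ) (c : ℚ) (t : Fin m → R) (i : Fin m) :
    ∀ j : ℤ, 0 < j → (shiftArg R m c t i).coeff j = 0 := by
  intro j hj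
  rw [shiftArg, HahnSeries.coeff_add, HahnSeries.C_apply, HahnSeries.coeff_single,
    HahnSeries.coeff_single, if_neg (by omega), if_neg (by omega), add_zero]

lemma shiftArg_coeff_zero (m : ℕ) (c : ℚ) (t : Fin m → R) (i : Fin m) :
    (shiftArg R m c t i).coeff 0 = t i := by
  rw [shiftArg, HahnSeries.coeff_add, HahnSeries.C_apply, HahnSeries.coeff_single_same,
    HahnSeries.coeff_single, if_neg (by omega), add_zero]

/-- halving the times: `σ(t + c[z⁻¹]) = τ(t/2 + (c/2)[z⁻¹])`. -/
lemma sigmaShift_eq_tauShift (m : ℕ) (τ : MvPolynomial (Fin m) R) (c : ℚ) (t : Fin m → R) :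
    sigmaShift R m τ c t = tauShift R m τ (c/2) (fun i => (1/2 : ℚ) • t i) := by
  have harg : (fun i => (1/2 : ℚ) • shiftArg R m c t i)
      = shiftArg R m (c/2) (fun i => (1/2 : ℚ) • t i) := by
    funext i
    ext j
    rw [HahnSeries.coeff_smul, shiftArg, shiftArg, HahnSeries.coeff_add, HahnSeries.coeff_add,
      HahnSeries.C_apply, HahnSeries.C_apply]
    simp only [HahnSeries.coeff_single, smul_add]
    have key : (1/2 : ℚ) • (algebraMap ℚ R (c / (2 * (i : ℕ) + 1)))
        = algebraMap ℚ R (c / 2 / (2 * (i : ℕ) + 1)) := by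
      rw [Algebra.smul_def, ← map_mul]
      congr 1
      ring
    split_ifs <;> simp_all
  rw [sigmaShift, tauShift, harg]

end Lemmas3

open PowerSeries Finset in
/-- **main theorem, truncated form.** Suppose `τ` (a function of the
odd times `t_1, t_3, …, t_{2m−1}`) satisfies the KdV Hirota bilinear identity: for
every even formal power series `f(z) ∈ R[[z²]]`, the formal residue (coefficient of
`z^{−1}`) of `f(z)·exp(ξ°(t−t',z))·τ(t−[z⁻¹])·τ(t'+[z⁻¹])` vanishes. Then
`σ(t) := τ(t/2)` satisfies the BKP Hirota bilinear identity:
`Res_z [ z^{−1} exp(ξ°(t−t',z)) σ(t−2[z⁻¹]) σ(t'+2[z⁻¹]) ] = σ(t)σ(t')`. -/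
theorem kdv_tau_is_bkp_tau (R : Type*) [CommRing R] [Algebra ℚ R] (m : ℕ)
    (τ : MvPolynomial (Fin m) R)
    (hKdV : ∀ f : PowerSeries R, (∀ n : ℕ, Odd n → PowerSeries.coeff n f = 0) →
      ∀ t t' : Fin m → R,
        ((HahnSeries.ofPowerSeries ℤ R) (f * expS R (xiOdd R m (t - t'))) *
          tauShift R m τ (-1) t * tauShift R m τ 1 t').coeff (-1) = 0) :
    ∀ t t' : Fin m → R,
      (HahnSeries.single (-1 : ℤ) (1 : R) *
        (HahnSeries.ofPowerSeries ℤ R) (expS R (xiOdd R m (t - t'))) *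
        sigmaShift R m τ (-2) t * sigmaShift R m τ 2 t').coeff (-1)
      = sigma' R m τ t * sigma' R m τ t' := by
  intro t t'
  set Φ := HahnSeries.ofPowerSeries ℤ R with hΦ
  set u : Fin m → R := fun i => (1/2 : ℚ) • t i with hu
  set u' : Fin m → R := fun i => (1/2 : ℚ) • t' i with hu'
  set ξ := xiOdd R m (u - u') with hξ
  have hξ0 : constantCoeff ξ = 0 := xiOdd_constantCoeff m _
  have hξodd : ∀ j, Even j → coeff j ξ = 0 := fun j hj => xiOdd_even_coeff m _ hj
  set E := expS R ξ with hE
  set E' := expS R (-ξ) with hE'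
  set g : PowerSeries R := E - E' with hg
  set f : PowerSeries R := PowerSeries.mk (fun n => coeff (n+1) g) with hf
  -- f has only even coefficients
  have hfodd : ∀ n : ℕ, Odd n → coeff n f = 0 := by
    intro n hn
    rw [hf, PowerSeries.coeff_mk, hg, map_sub,
      expS_sub_even hξodd (by rw [Nat.odd_iff] at hn; rw [Nat.even_iff]; omega), sub_self]
  -- X * f = g
  have hXf : (PowerSeries.X : PowerSeries R) * f = g := by
    ext n
    rcases n with _ | n
    · rw [PowerSeries.coeff_zero_X_mul, hg, map_sub, hE, hE', expS_coeff_zero,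
        expS_coeff_zero, sub_self]
    · rw [PowerSeries.coeff_succ_X_mul, hf, PowerSeries.coeff_mk]
  -- full exponential is E * E
  have hEfull : expS R (xiOdd R m (t - t')) = E * E := by
    have harg : t - t' = (u - u') + (u - u') := by
      funext i
      simp only [Pi.sub_apply, Pi.add_apply, hu, hu']
      module
    rw [harg, xiOdd_add, hE, hξ, expS_add hξ0 hξ0]
  have hE'E : E' * E = 1 := by
    rw [hE, hE', mul_comm]
    exact expS_mul_expS_neg hξ0
  -- the key Laurent series identity
  have hmain : HahnSeries.single (-1 : ℤ) (1 : R) * Φ (expS R (xiOdd R m (t - t')))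
      = Φ (f * E) + HahnSeries.single (-1 : ℤ) (1 : R) := by
    have h1 : Φ (expS R (xiOdd R m (t - t')))
        = HahnSeries.single (1 : ℤ) (1 : R) * Φ (f * E) + 1 := by
      have h2 : expS R (xiOdd R m (t - t')) = PowerSeries.X * (f * E) + 1 := by
        rw [← mul_assoc, hXf, hg, hEfull, sub_mul, hE'E, sub_add_cancel]
      rw [h2, map_add, map_one, map_mul, hΦ, HahnSeries.ofPowerSeries_X]
    rw [h1, mul_add, mul_one, ← mul_assoc, HahnSeries.single_mul_single]
    norm_num
  rw [hmain, add_mul, add_mul, HahnSeries.coeff_add]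
  -- the KdV term vanishes
  have hkdv0 : (Φ (f * E) * sigmaShift R m τ (-2) t * sigmaShift R m τ 2 t').coeff (-1) = 0 := by
    have h1 : sigmaShift R m τ (-2) t = tauShift R m τ (-1) u := by
      rw [sigmaShift_eq_tauShift]
      norm_num [hu]
    have h2 : sigmaShift R m τ 2 t' = tauShift R m τ 1 u' := by
      rw [sigmaShift_eq_tauShift]
      norm_num [hu']
    rw [h1, h2, hE, hξ]
    exact hKdV f hfodd u u'
  rw [hkdv0, zero_add]
  -- the remaining term
  have hTn := aeval_nonpos m _ (fun i => shiftArg_nonpos m (-1) u i) τ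
  have hTn' := aeval_nonpos m _ (fun i => shiftArg_nonpos m 1 u' i) τ
  have h1 : sigmaShift R m τ (-2) t = tauShift R m τ (-1) u := by
    rw [sigmaShift_eq_tauShift]; norm_num [hu]
  have h2 : sigmaShift R m τ 2 t' = tauShift R m τ 1 u' := by
    rw [sigmaShift_eq_tauShift]; norm_num [hu']
  rw [h1, h2, mul_assoc]
  have hres := HahnSeries.coeff_single_mul_add
    (r := (1 : R)) (x := tauShift R m τ (-1) u * tauShift R m τ 1 u') (a := 0) (b := -1)
  simp only [zero_add, one_mul] at hres
  rw [hres]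
  have hmul := hahn_mul_nonpos (x := tauShift R m τ (-1) u) (y := tauShift R m τ 1 u')
    hTn.1 hTn'.1
  rw [tauShift, tauShift] at hmul ⊢
  rw [hmul.2, hTn.2, hTn'.2]
  rw [sigma', sigma']
  congr 1 <;> · apply congrArg (fun v => MvPolynomial.eval v τ)
                funext i
                rw [shiftArg_coeff_zero]
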